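/- arXiv:1301.0719 — 7 statements merged into one kernel-verified Lean document; each statement's English description precedes it below -/
import Mathlib

section
/- Let n ≥ 2, x₀ > 0 and G*(x) = min((x/(n·x₀))^{1/(n-1)}, 1). Then for every probability measure μ on [0,∞) with mean x₀, ∫₀^∞ G*(x)^{n-1} dμ(x) ≤ 1/n, and equality holds when μ is the measure with distribution function G*. -/
open MeasureTheory Set

/-- for `G*(x) = min((x/(n x₀))^{1/(n-1)}, 1)`, every probability measure on
`[0,∞)` with mean `x₀` satisfies `∫ G*(x)^{n-1} dμ ≤ 1/n`, with equality for the measure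
with distribution function `G*` (which has the indicated density on `(0, n x₀)`). -/
theorem stmt_2 (n : ℕ) (hn : 2 ≤ n) (x₀ : ℝ) (hx₀ : 0 < x₀)
    (Gstar : ℝ → ℝ)
    (hG : ∀ x, Gstar x = min ((x / (n * x₀)) ^ (((n:ℝ) - 1)⁻¹)) 1) :
    (∀ μ : Measure ℝ, IsProbabilityMeasure μ → μ (Set.Iio 0) = 0 →
        Integrable (fun x => x) μ → ∫ x, x ∂μ = x₀ →
        ∫ x, Gstar x ^ (n - 1) ∂μ ≤ 1 / n) ∧
      ∫ x in (0:ℝ)..(n * x₀),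
          Gstar x ^ (n - 1) *
            (1 / (((n:ℝ) - 1) * n * x₀) * (x / (n * x₀)) ^ ((2 - (n:ℝ)) / ((n:ℝ) - 1)))
        = 1 / n := by
  have hN2 : (2:ℝ) ≤ (n:ℝ) := by exact_mod_cast hn
  have hN1 : (0:ℝ) < (n:ℝ) - 1 := by linarith
  have hNpos : (0:ℝ) < n := by linarith
  have hM : (0:ℝ) < n * x₀ := by positivity
  have hcast : ((n - 1 : ℕ) : ℝ) = (n:ℝ) - 1 := by
    have := Nat.cast_sub (by omega : 1 ≤ n) (R := ℝ)
    simpa using this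
  -- key pow identity
  have hkey : ∀ t : ℝ, 0 ≤ t → (t ^ (((n:ℝ) - 1)⁻¹)) ^ (n - 1) = t := by
    intro t ht
    rw [← Real.rpow_natCast (t ^ (((n:ℝ) - 1)⁻¹)) (n - 1), ← Real.rpow_mul ht, hcast,
      inv_mul_cancel₀ (ne_of_gt hN1), Real.rpow_one]
  constructor
  · intro μ hμ hneg hint hmean
    have hae : ∀ᵐ x ∂μ, 0 ≤ x := by
      rw [ae_iff]
      convert hneg using 2
      ext x
      simp [Set.mem_Iio, not_le]
    have hle : ∀ x : ℝ, 0 ≤ x → Gstar x ^ (n - 1) ≤ x / (n * x₀) := by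
      intro x hx
      have ht : 0 ≤ x / (n * x₀) := by positivity
      rw [hG]
      calc (min ((x / (n * x₀)) ^ (((n:ℝ) - 1)⁻¹)) 1) ^ (n - 1)
          ≤ ((x / (n * x₀)) ^ (((n:ℝ) - 1)⁻¹)) ^ (n - 1) :=
            pow_le_pow_left₀ (le_min (Real.rpow_nonneg ht _) zero_le_one)
              (min_le_left _ _) _
        _ = x / (n * x₀) := hkey _ ht
    have hnonneg : ∀ x : ℝ, 0 ≤ x → 0 ≤ Gstar x ^ (n - 1) := by
      intro x hx
      rw [hG]
      exact pow_nonneg (le_min (Real.rpow_nonneg (by positivity) _) zero_le_one) _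
    have h1 : ∫ x, Gstar x ^ (n - 1) ∂μ ≤ ∫ x, x / (n * x₀) ∂μ := by
      apply integral_mono_of_nonneg
      · filter_upwards [hae] with x hx using hnonneg x hx
      · exact hint.div_const _
      · filter_upwards [hae] with x hx using hle x hx
    refine h1.trans_eq ?_
    rw [integral_div, hmean]
    rw [div_eq_div_iff hM.ne' hNpos.ne']
    ring
  · -- equality part
    set M : ℝ := n * x₀ with hMdef
    set r : ℝ := ((n:ℝ) - 1)⁻¹ with hrdef
    have hcongr : Set.EqOn
        (fun x => Gstar x ^ (n - 1) *
            (1 / (((n:ℝ) - 1) * n * x₀) * (x / (n * x₀)) ^ ((2 - (n:ℝ)) / ((n:ℝ) - 1))))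
        (fun x => 1 / (((n:ℝ) - 1) * n * x₀) * (x / M) ^ r)
        (Set.uIcc 0 M) := by
      intro x hx
      rw [Set.uIcc_of_le (le_of_lt hM)] at hx
      obtain ⟨hx0, hxM⟩ := hx
      have ht0 : 0 ≤ x / M := by positivity
      have ht1 : x / M ≤ 1 := (div_le_one hM).2 hxM
      simp only
      have hGx : Gstar x ^ (n - 1) = x / M := by
        rw [hG]
        have : (x / M) ^ r ≤ 1 := by
          rw [← Real.one_rpow r]
          exact Real.rpow_le_rpow ht0 ht1 (inv_nonneg.2 hN1.le)
        rw [min_eq_left this]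
        exact hkey _ ht0
      rw [hGx]
      rcases eq_or_lt_of_le hx0 with h0 | h0
      · subst h0
        simp only [zero_div, hrdef]
        rw [Real.zero_rpow (by positivity : ((n:ℝ)-1)⁻¹ ≠ 0)]
        ring
      · have htpos : 0 < x / M := by positivity
        rw [show (x / M) * (1 / (((n:ℝ) - 1) * ↑n * x₀) * (x / (↑n * x₀)) ^ ((2 - (n:ℝ)) / ((n:ℝ) - 1)))
            = 1 / (((n:ℝ) - 1) * ↑n * x₀) * ((x / M) ^ (1:ℝ) * (x / M) ^ ((2 - (n:ℝ)) / ((n:ℝ) - 1)))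
          by rw [Real.rpow_one]; ring]
        rw [← Real.rpow_add htpos]
        congr 2
        rw [hrdef]
        field_simp
        norm_num
    rw [intervalIntegral.integral_congr hcongr]
    rw [intervalIntegral.integral_const_mul]
    have hcongr2 : Set.EqOn (fun x => (x / M) ^ r) (fun x => (M ^ r)⁻¹ * x ^ r)
        (Set.uIcc 0 M) := by
      intro x hx
      rw [Set.uIcc_of_le (le_of_lt hM)] at hx
      simp only
      rw [Real.div_rpow hx.1 (le_of_lt hM)]
      ring
    rw [intervalIntegral.integral_congr hcongr2, intervalIntegral.integral_const_mul,
      integral_rpow (Or.inl ((by norm_num : (-1:ℝ) < 0).trans (inv_pos.2 hN1)))]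
    have h0r : (0:ℝ) ^ (r + 1) = 0 := Real.zero_rpow (by positivity : (0:ℝ) < r + 1).ne'
    rw [h0r, sub_zero]
    have hMr : M ^ (r + 1) = M ^ r * M := by
      rw [Real.rpow_add hM, Real.rpow_one]
    rw [hMr]
    have hMrpos : (0:ℝ) < M ^ r := Real.rpow_pos_of_pos hM _
    rw [hrdef, hMdef]
    field_simp
    ring
end

section
/- Let n ≥ 2, K ≥ 0, x₀ > 0 and set N = n + K·(n-1). Let G*(x) = min((x/(N·x₀))^{1/(N-1)}, 1) for x ≥ 0. Then for all x ≥ 0, (1+K)·G*(x)^{n-1} - K·x·∫_x^∞ G*(y)^{n-1}/y² dy - x/(N·x₀) ≤ 0, with equality for 0 ≤ x ≤ N·x₀. -/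
open MeasureTheory Set

/-- with `N = n + K(n-1)` and `G*(x) = min((x/(N x₀))^{1/(N-1)}, 1)`, for all
`x ≥ 0` we have `(1+K) G*(x)^{n-1} - K x ∫_x^∞ G*(y)^{n-1}/y² dy - x/(N x₀) ≤ 0`,
with equality for `0 ≤ x ≤ N x₀`.  Here `G*(y)^{n-1} = min((y/(N x₀))^{1/(K+1)}, 1)`. -/
theorem stmt_3 (n : ℕ) (hn : 2 ≤ n) (K : ℝ) (hK : 0 ≤ K) (x₀ : ℝ) (hx₀ : 0 < x₀)
    (N : ℝ) (hN : N = n + K * (n - 1))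
    (Gpow : ℝ → ℝ)
    (hGpow : ∀ x, 0 ≤ x → Gpow x = min ((x / (N * x₀)) ^ ((K + 1)⁻¹)) 1) :
    ∀ x, 0 ≤ x →
      ((1 + K) * Gpow x - K * x * (∫ y in Set.Ioi x, Gpow y / y ^ 2) - x / (N * x₀) ≤ 0 ∧
        (x ≤ N * x₀ →
          (1 + K) * Gpow x - K * x * (∫ y in Set.Ioi x, Gpow y / y ^ 2) - x / (N * x₀) = 0)) := by
  have hn2 : (2:ℝ) ≤ (n:ℝ) := by exact_mod_cast hn
  have hNpos : 0 < N := by nlinarith [mul_nonneg hK (by linarith : (0:ℝ) ≤ (n:ℝ) - 1)]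
  set a : ℝ := N * x₀ with ha_def
  have ha : 0 < a := mul_pos hNpos hx₀
  set α : ℝ := (K + 1)⁻¹ with hα_def
  have hK1 : (0:ℝ) < K + 1 := by linarith
  have hα0 : 0 < α := by positivity
  have hα1 : α ≤ 1 := by
    rw [hα_def, inv_le_one_iff₀]; right; linarith
  -- value of Gpow on [0, a]
  have hGle : ∀ y, 0 ≤ y → y ≤ a → Gpow y = (y / a) ^ α := by
    intro y hy0 hya
    rw [hGpow y hy0, min_eq_left]
    exact Real.rpow_le_one (by positivity) (by rw [div_le_one ha]; exact hya) hα0.le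
  -- value of Gpow on [a, ∞)
  have hGge : ∀ y, a ≤ y → Gpow y = 1 := by
    intro y hya
    rw [hGpow y (ha.le.trans hya), min_eq_right]
    exact Real.one_le_rpow (by rw [le_div_iff₀ ha]; linarith) hα0.le
  -- pointwise value of the integrand on tails
  have htval : ∀ c : ℝ, a ≤ c → ∀ y ∈ Set.Ioi c, Gpow y / y ^ 2 = y ^ (-2 : ℝ) := by
    intro c hc y hy
    have hy0 : 0 < y := (ha.trans_le hc).trans hy
    rw [hGge y (hc.trans (le_of_lt hy)),
      Real.rpow_neg hy0.le, show (2:ℝ) = ((2:ℕ):ℝ) by norm_num, Real.rpow_natCast]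
    field_simp
  -- tail integral for c ≥ a
  have htail : ∀ c : ℝ, a ≤ c → (∫ y in Set.Ioi c, Gpow y / y ^ 2) = 1 / c := by
    intro c hc
    have hc0 : 0 < c := ha.trans_le hc
    rw [setIntegral_congr_fun measurableSet_Ioi (htval c hc),
      integral_Ioi_rpow_of_lt (by norm_num) hc0,
      show (-2 : ℝ) + 1 = -1 by norm_num, Real.rpow_neg_one]
    field_simp
  have htailInt : ∀ c : ℝ, a ≤ c →
      IntegrableOn (fun y : ℝ => Gpow y / y ^ 2) (Set.Ioi c) := by
    intro c hc
    have hc0 : 0 < c := ha.trans_le hc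
    exact (integrableOn_Ioi_rpow_of_lt (by norm_num : (-2:ℝ) < -1) hc0).congr_fun
      (fun y hy => (htval c hc y hy).symm) measurableSet_Ioi
  intro x hx
  rcases eq_or_lt_of_le hx with hx0 | hx0
  · -- x = 0
    have hG0 : Gpow 0 = 0 := by
      rw [hGpow 0 le_rfl, min_eq_left]
      · rw [zero_div, Real.zero_rpow hα0.ne']
      · rw [zero_div, Real.zero_rpow hα0.ne']; norm_num
    rw [← hx0, hG0]
    norm_num
  -- now 0 < x
  rcases le_or_gt x a with hxa | hxa
  · -- x ≤ a : equality
    have hmain : (1 + K) * Gpow x - K * x * (∫ y in Set.Ioi x, Gpow y / y ^ 2) - x / a = 0 := by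
      rcases eq_or_lt_of_le hK with hK0 | hK0
      · -- K = 0
        rw [hGle x hx hxa, ← hK0]
        have : α = 1 := by rw [hα_def, ← hK0]; norm_num
        rw [this, Real.rpow_one]
        ring
      · -- K > 0
        have hαlt : α < 1 := by
          rw [hα_def, inv_lt_one_iff₀]; right; linarith
        have hα1' : α - 1 ≠ 0 := by
          intro h; linarith [hαlt, h]
        have h0mem : (0:ℝ) ∉ Set.uIcc x a := by
          intro h
          rcases Set.mem_uIcc.mp h with ⟨h1, h2⟩ | ⟨h1, h2⟩ <;> linarith
        have hrne : α - 2 ≠ -1 := by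
          intro h; exact hα1' (by linarith)
        -- pointwise value of the integrand on (x, a]
        have hval : ∀ y ∈ Set.Ioc x a, Gpow y / y ^ 2 = a ^ (-α) * y ^ (α - 2) := by
          intro y hy
          have hy0 : 0 < y := hx0.trans hy.1
          rw [hGle y hy0.le hy.2, Real.div_rpow hy0.le ha.le, Real.rpow_neg ha.le,
            show α - 2 = α + (-2) by ring, Real.rpow_add hy0,
            Real.rpow_neg hy0.le, show (2:ℝ) = ((2:ℕ):ℝ) by norm_num, Real.rpow_natCast]
          field_simp
        -- compute the integral over (x, a]
        have hIoc : (∫ y in Set.Ioc x a, Gpow y / y ^ 2)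
            = a ^ (-α) * ((a ^ (α - 1) - x ^ (α - 1)) / (α - 1)) := by
          rw [setIntegral_congr_fun measurableSet_Ioc hval,
            ← intervalIntegral.integral_of_le hxa, intervalIntegral.integral_const_mul,
            integral_rpow (Or.inr ⟨hrne, h0mem⟩),
            show α - 2 + 1 = α - 1 by ring]
        have hIocInt : IntegrableOn (fun y : ℝ => Gpow y / y ^ 2) (Set.Ioc x a) := by
          have h1 : IntervalIntegrable (fun y : ℝ => a ^ (-α) * y ^ (α - 2)) volume x a :=
            (intervalIntegral.intervalIntegrable_rpow (Or.inr h0mem)).const_mul _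
          rw [intervalIntegrable_iff_integrableOn_Ioc_of_le hxa] at h1
          exact h1.congr_fun (fun y hy => (hval y hy).symm) measurableSet_Ioc
        have hsplit : (∫ y in Set.Ioi x, Gpow y / y ^ 2)
            = a ^ (-α) * ((a ^ (α - 1) - x ^ (α - 1)) / (α - 1)) + 1 / a := by
          rw [← Set.Ioc_union_Ioi_eq_Ioi hxa,
            setIntegral_union Set.Ioc_disjoint_Ioi_same measurableSet_Ioi hIocInt
              (htailInt a le_rfl), hIoc, htail a le_rfl]
        -- algebra
        rw [hsplit, hGle x hx hxa]
        have hxq : x * (a ^ (-α) * x ^ (α - 1)) = (x / a) ^ α := by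
          rw [Real.div_rpow hx ha.le, Real.rpow_neg ha.le,
            show x * ((a ^ α)⁻¹ * x ^ (α - 1)) = (x ^ (α - 1) * x) * (a ^ α)⁻¹ by ring,
            ← Real.rpow_add_one hx0.ne', show α - 1 + 1 = α by ring]
          field_simp
        have haa : a ^ (-α) * a ^ (α - 1) = 1 / a := by
          rw [← Real.rpow_add ha, show -α + (α - 1) = -1 by ring, Real.rpow_neg_one]
          field_simp
        have h2 : (α - 1) * (K + 1) = -K := by
          rw [hα_def]; field_simp; ring
        have hexp : a ^ (-α) * ((a ^ (α - 1) - x ^ (α - 1)) / (α - 1))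
            = (a ^ (-α) * a ^ (α - 1) - a ^ (-α) * x ^ (α - 1)) / (α - 1) := by ring
        rw [hexp, haa]
        set q : ℝ := a ^ (-α) * x ^ (α - 1) with hq_def
        set p : ℝ := (x / a) ^ α with hp_def
        have e0 : K / (α - 1) = -(K + 1) := by
          rw [div_eq_iff hα1']; linear_combination h2
        have e1 : K * x * ((1 / a - q) / (α - 1) + 1 / a)
            = K / (α - 1) * (x * (1 / a - q)) + K * x / a := by ring
        have e2 : x * (1 / a - q) = x / a - p := by rw [← hxq]; ring
        rw [e1, e0, e2]; ring
    exact ⟨le_of_eq hmain, fun _ => hmain⟩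
  · -- x > a
    have hint : (∫ y in Set.Ioi x, Gpow y / y ^ 2) = 1 / x := htail x hxa.le
    have hGx : Gpow x = 1 := hGge x hxa.le
    constructor
    · rw [hint, hGx]
      have hx' : 0 < x := ha.trans hxa
      have h1 : K * x * (1 / x) = K := by field_simp
      rw [h1]
      have : 1 ≤ x / a := by rw [le_div_iff₀ ha]; linarith
      linarith
    · intro h; linarith
end

section
/- Let n ≥ 2, K ≥ 0, x₀ > 0, N = n + K(n-1), and C₁ = (N·x₀)^{-1/(K+1)}. Define G*(x) = (C₁·x^{1/(K+1)})^{1/(n-1)} on [0, N·x₀]. Then G*(N·x₀) = 1 and ∫₀^{N·x₀} x dG*(x) = x₀. -/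
open Set

/-- with `N = n + K(n-1)`, `C₁ = (N x₀)^{-1/(K+1)}` and
`G*(x) = (C₁ x^{1/(K+1)})^{1/(n-1)}` on `[0, N x₀]`, we have `G*(N x₀) = 1` and the mean
`∫₀^{N x₀} x dG*(x) = ∫₀^{N x₀} x G*'(x) dx = x₀`. -/
theorem stmt_4 (n : ℕ) (hn : 2 ≤ n) (K : ℝ) (hK : 0 ≤ K) (x₀ : ℝ) (hx₀ : 0 < x₀)
    (N : ℝ) (hN : N = n + K * (n - 1))
    (C₁ : ℝ) (hC₁ : C₁ = (N * x₀) ^ (-(K + 1)⁻¹))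
    (Gstar : ℝ → ℝ)
    (hG : ∀ x ∈ Set.Icc (0:ℝ) (N * x₀), Gstar x = (C₁ * x ^ ((K + 1)⁻¹)) ^ (((n:ℝ) - 1)⁻¹)) :
    Gstar (N * x₀) = 1 ∧
      ∫ x in (0:ℝ)..(N * x₀),
          x * (1 / ((K + 1) * ((n:ℝ) - 1)) * C₁ ^ (((n:ℝ) - 1)⁻¹) *
            x ^ (((K + 1) * ((n:ℝ) - 1))⁻¹ - 1))
        = x₀ := by
  have hn1 : (1:ℝ) ≤ (n:ℝ) - 1 := by
    have : (2:ℝ) ≤ (n:ℝ) := by exact_mod_cast hn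
    linarith
  have hK1 : (0:ℝ) < K + 1 := by linarith
  have ha : 0 < (K + 1) * ((n:ℝ) - 1) := by nlinarith
  have hNpos : 0 < N := by rw [hN]; nlinarith
  have hM : 0 < N * x₀ := mul_pos hNpos hx₀
  set a := (K + 1) * ((n:ℝ) - 1) with hadef
  set b := a⁻¹ with hb
  have hbpos : 0 < b := inv_pos.mpr ha
  set M := N * x₀ with hMdef
  constructor
  · rw [hG M ⟨hM.le, le_refl _⟩, hC₁, ← Real.rpow_add hM, neg_add_cancel,
      Real.rpow_zero, Real.one_rpow]
  · have hcongr : Set.EqOn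
        (fun x => x * (1 / a * C₁ ^ (((n:ℝ) - 1)⁻¹) * x ^ (b - 1)))
        (fun x => (1 / a * C₁ ^ (((n:ℝ) - 1)⁻¹)) * x ^ b) (Set.uIcc (0:ℝ) M) := by
      intro x hx
      rw [Set.uIcc_of_le hM.le] at hx
      rcases eq_or_lt_of_le hx.1 with h | h
      · simp [← h, Real.zero_rpow hbpos.ne']
      · simp only
        rw [Real.rpow_sub h, Real.rpow_one]
        field_simp
    rw [intervalIntegral.integral_congr hcongr, intervalIntegral.integral_const_mul,
      integral_rpow (Or.inl (by linarith)),
      Real.zero_rpow (by positivity : b + 1 ≠ 0), sub_zero]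
    have hC : C₁ ^ (((n:ℝ) - 1)⁻¹) = M ^ (-b) := by
      rw [hC₁, ← Real.rpow_mul hM.le]
      congr 1
      rw [hb, hadef, mul_inv]
      ring
    rw [hC]
    have hMM : M ^ (-b) * M ^ (b + 1) = M := by
      rw [← Real.rpow_add hM]; norm_num
    have hab : a * b = 1 := mul_inv_cancel₀ ha.ne'
    have key : M = (1 + a) * x₀ := by rw [hMdef, hN, hadef]; ring
    have hb1 : (0:ℝ) < b + 1 := by linarith
    have step : 1 / a * M ^ (-b) * (M ^ (b + 1) / (b + 1))
        = (M ^ (-b) * M ^ (b + 1)) / (a * (b + 1)) := by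
      field_simp
    rw [step, hMM, mul_add, hab, mul_one, key, mul_comm (1 + a) x₀, mul_div_assoc,
      div_self (by linarith : (1:ℝ) + a ≠ 0), mul_one]
end

section
/- Let K > 0, n ≥ 2, and suppose φ, ψ, θ are differentiable functions on [x₀, r] satisfying φ'(y)·ψ'(y) = (1+K)·θ'(y) and K·ψ'(y) = (y - φ(y))·ψ''(y) for all y ∈ (x₀, r), with boundary conditions φ(x₀) = x₀ and θ(x₀) = ψ(x₀), and with ψ'' > 0 on (x₀,r). Then for all y ∈ [x₀, r], θ(y) = ψ(y) - (K/(K+1))·ψ'(y)²/ψ''(y), equivalently θ(y) = ψ(y) + (φ(y) - y)·ψ'(y)/(K+1). -/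
open Set

/-- if `φ' ψ' = (1+K) θ'` and `K ψ' = (y - φ) ψ''` on `(x₀,r)` with
`φ(x₀) = x₀`, `θ(x₀) = ψ(x₀)` and `ψ'' > 0`, then
`θ = ψ - (K/(K+1)) ψ'²/ψ''` on `(x₀,r)` and equivalently
`θ = ψ + (φ - y) ψ'/(K+1)` on `[x₀,r]`. -/
theorem stmt_8 (n : ℕ) (hn : 2 ≤ n) (K : ℝ) (hK : 0 < K) (x₀ r : ℝ) (hx₀ : 0 < x₀)
    (hr : x₀ < r)
    (φ ψ θ φ' ψ' ψ'' θ' : ℝ → ℝ)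
    (hφc : ContinuousOn φ (Set.Icc x₀ r)) (hψc : ContinuousOn ψ (Set.Icc x₀ r))
    (hθc : ContinuousOn θ (Set.Icc x₀ r)) (hψ'c : ContinuousOn ψ' (Set.Icc x₀ r))
    (hφd : ∀ y ∈ Set.Ioo x₀ r, HasDerivAt φ (φ' y) y)
    (hψd : ∀ y ∈ Set.Ioo x₀ r, HasDerivAt ψ (ψ' y) y)
    (hψ'd : ∀ y ∈ Set.Ioo x₀ r, HasDerivAt ψ' (ψ'' y) y)
    (hθd : ∀ y ∈ Set.Ioo x₀ r, HasDerivAt θ (θ' y) y)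
    (hode1 : ∀ y ∈ Set.Ioo x₀ r, φ' y * ψ' y = (1 + K) * θ' y)
    (hode2 : ∀ y ∈ Set.Ioo x₀ r, K * ψ' y = (y - φ y) * ψ'' y)
    (hψ''pos : ∀ y ∈ Set.Ioo x₀ r, 0 < ψ'' y)
    (hφx₀ : φ x₀ = x₀) (hθx₀ : θ x₀ = ψ x₀) :
    (∀ y ∈ Set.Ioo x₀ r, θ y = ψ y - (K / (K + 1)) * (ψ' y) ^ 2 / ψ'' y) ∧
      (∀ y ∈ Set.Icc x₀ r, θ y = ψ y + (φ y - y) * ψ' y / (K + 1)) := by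
  have hK1 : (K : ℝ) + 1 ≠ 0 := by positivity
  set F : ℝ → ℝ := fun y => θ y - ψ y - (φ y - y) * ψ' y / (K + 1) with hF
  have hFc : ContinuousOn F (Set.Icc x₀ r) := by
    apply (hθc.sub hψc).sub
    exact (((hφc.sub continuousOn_id).mul hψ'c).div_const _)
  have hFd : ∀ y ∈ Set.Ioo x₀ r, HasDerivAt F 0 y := by
    intro y hy
    have h1 := hθd y hy
    have h2 := hψd y hy
    have h3 := hφd y hy
    have h4 := hψ'd y hy
    have h : HasDerivAt F (θ' y - ψ' y -
        ((φ' y - 1) * ψ' y + (φ y - y) * ψ'' y) / (K + 1)) y := by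
      exact (h1.sub h2).sub ((((h3.sub (hasDerivAt_id y)).mul h4).div_const _))
    have e1 := hode1 y hy
    have e2 := hode2 y hy
    have : θ' y - ψ' y - ((φ' y - 1) * ψ' y + (φ y - y) * ψ'' y) / (K + 1) = 0 := by
      field_simp
      nlinarith [e1, e2]
    rwa [this] at h
  have hFx₀ : F x₀ = 0 := by simp [hF, hθx₀, hφx₀]
  have hFzero : ∀ y ∈ Set.Icc x₀ r, F y = 0 := by
    intro y hy
    rcases eq_or_lt_of_le hy.1 with h | h
    · rw [← h]; exact hFx₀
    · have hsub : Set.Icc x₀ y ⊆ Set.Icc x₀ r := Set.Icc_subset_Icc le_rfl hy.2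
      have hsub' : Set.Ioo x₀ y ⊆ Set.Ioo x₀ r := Set.Ioo_subset_Ioo le_rfl hy.2
      obtain ⟨c, hc, hc'⟩ := exists_hasDerivAt_eq_slope F (fun _ => 0) h
        (hFc.mono hsub) (fun z hz => hFd z (hsub' hz))
      have : (F y - F x₀) / (y - x₀) = 0 := hc'.symm
      have := div_eq_zero_iff.mp this
      rcases this with h' | h'
      · linarith [hFx₀]
      · exfalso; exact (sub_ne_zero.mpr (ne_of_gt h)) h'
  have part2 : ∀ y ∈ Set.Icc x₀ r, θ y = ψ y + (φ y - y) * ψ' y / (K + 1) := by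
    intro y hy
    have := hFzero y hy
    simp only [hF] at this
    linarith
  refine ⟨?_, part2⟩
  intro y hy
  have h2 := part2 y (Set.Ioo_subset_Icc_self hy)
  have e2 := hode2 y hy
  have hpos := hψ''pos y hy
  have hne : ψ'' y ≠ 0 := ne_of_gt hpos
  rw [h2]
  have : φ y - y = -(K * ψ' y) / ψ'' y := by
    field_simp
    linarith [e2]
  rw [this]
  field_simp
  ring
end

section
/- Let K > 0, n ≥ 2 and let J solve the ODE J'(u) = (J(u) + 1 - (1-u)^{1/(n-1)}) / ((K+1)·(1 - u - J(u)^{n-1})) with J(0) = 0 for u ≥ 0, and let u* = sup{u : J(u) < (1-u)^{1/(n-1)}}. Then u* < 1, and for z* = 1 - u* the function H(z) = K/((K+1)·(z - J(1-z)^{n-1})) satisfies 0 < H(z) ≤ K/((K+1)·(z - z*)) for all z ∈ (z*, 1). -/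
open Set

private lemma mono_aux {ψ : ℝ → ℝ} {x y : ℝ} (hxy : x ≤ y)
    (hc : ContinuousOn ψ (Set.Icc x y))
    (hd : ∀ t ∈ Set.Ioo x y, ∃ d, 0 ≤ d ∧ HasDerivAt ψ d t) : ψ x ≤ ψ y := by
  rcases eq_or_lt_of_le hxy with rfl | hlt
  · exact le_rfl
  have hmono := monotoneOn_of_deriv_nonneg (convex_Icc x y) hc ?_ ?_
  · exact hmono (left_mem_Icc.2 hxy) (right_mem_Icc.2 hxy) hxy
  · intro t ht
    rw [interior_Icc] at ht
    obtain ⟨d, _, hder⟩ := hd t ht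
    exact hder.differentiableAt.differentiableWithinAt
  · intro t ht
    rw [interior_Icc] at ht
    obtain ⟨d, hd0, hder⟩ := hd t ht
    rw [hder.deriv]; exact hd0

private lemma strict_aux {ψ : ℝ → ℝ} {x y : ℝ} (hxy : x < y)
    (hc : ContinuousOn ψ (Set.Icc x y))
    (hd : ∀ t ∈ Set.Ioo x y, ∃ d, 0 < d ∧ HasDerivAt ψ d t) : ψ x < ψ y := by
  have hmono := strictMonoOn_of_deriv_pos (convex_Icc x y) hc ?_
  · exact hmono (left_mem_Icc.2 hxy.le) (right_mem_Icc.2 hxy.le) hxy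
  · intro t ht
    rw [interior_Icc] at ht
    obtain ⟨d, hd0, hder⟩ := hd t ht
    rw [hder.deriv]; exact hd0

set_option maxHeartbeats 2000000 in
/-- for the solution `J` of
`J'(u) = (J(u) + 1 - (1-u)^{1/(n-1)}) / ((K+1)(1 - u - J(u)^{n-1}))`, `J(0) = 0`, with
`u* = sup{u : J(u) < (1-u)^{1/(n-1)}}`, we have `u* < 1` and, with `z* = 1 - u*`,
`H(z) = K/((K+1)(z - J(1-z)^{n-1}))` satisfies `0 < H(z) ≤ K/((K+1)(z - z*))` on `(z*,1)`. -/
theorem stmt_9 (n : ℕ) (hn : 2 ≤ n) (K : ℝ) (hK : 0 < K)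
    (J : ℝ → ℝ) (hJc : Continuous J) (hJ0 : J 0 = 0)
    (hJode : ∀ u : ℝ, 0 ≤ u → J u < (1 - u) ^ (((n:ℝ) - 1)⁻¹) →
      HasDerivAt J
        ((J u + 1 - (1 - u) ^ (((n:ℝ) - 1)⁻¹)) / ((K + 1) * (1 - u - J u ^ (n - 1)))) u)
    (ustar : ℝ)
    (hustar : ustar = sSup {u : ℝ | 0 ≤ u ∧ J u < (1 - u) ^ (((n:ℝ) - 1)⁻¹)}) :
    ustar < 1 ∧
      ∀ z ∈ Set.Ioo (1 - ustar) 1,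
        0 < K / ((K + 1) * (z - J (1 - z) ^ (n - 1))) ∧
          K / ((K + 1) * (z - J (1 - z) ^ (n - 1))) ≤ K / ((K + 1) * (z - (1 - ustar))) := by
  have hn2R : (2:ℝ) ≤ (n:ℝ) := by exact_mod_cast hn
  have hn1 : (1:ℝ) ≤ (n:ℝ) - 1 := by linarith
  set c : ℝ := ((n:ℝ) - 1)⁻¹ with hc_def
  have hc0 : 0 < c := by rw [hc_def]; positivity
  have hc1 : c ≤ 1 := by
    rw [hc_def]
    calc ((n:ℝ)-1)⁻¹ ≤ 1⁻¹ := inv_anti₀ one_pos hn1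
      _ = 1 := by norm_num
  have hK1 : (0:ℝ) < K + 1 := by linarith
  have hm : n - 1 ≠ 0 := by omega
  have hcast : ((n - 1 : ℕ) : ℝ) = (n:ℝ) - 1 := by
    have h1 : (1:ℕ) ≤ n := by omega
    push_cast [Nat.cast_sub h1]
    ring
  have hcm : c * ((n:ℝ) - 1) = 1 := inv_mul_cancel₀ (by linarith)
  have hgcont : Continuous (fun u : ℝ => (1 - u) ^ c) := by
    rw [continuous_iff_continuousAt]
    intro x
    exact (Real.continuousAt_rpow_const _ _ (Or.inr hc0.le)).comp
      ((continuous_const.sub continuous_id).continuousAt)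
  have hgpow : ∀ u : ℝ, u ≤ 1 → ((1 - u) ^ c) ^ (n - 1) = 1 - u := by
    intro u hu
    rw [← Real.rpow_natCast ((1-u)^c) (n-1), ← Real.rpow_mul (by linarith), hcast, hcm,
      Real.rpow_one]
  have hgpos : ∀ u : ℝ, u < 1 → 0 < (1-u)^c := fun u hu => Real.rpow_pos_of_pos (by linarith) c
  have hglt1 : ∀ u : ℝ, 0 < u → u ≤ 1 → (1-u)^c < 1 :=
    fun u h0 h1 => Real.rpow_lt_one (by linarith) (by linarith) hc0
  have hgle1 : ∀ u : ℝ, 0 ≤ u → u ≤ 1 → (1-u)^c ≤ 1 :=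
    fun u h0 h1 => Real.rpow_le_one (by linarith) (by linarith) hc0.le
  set S := {u : ℝ | 0 ≤ u ∧ J u < (1 - u) ^ c} with hS_def
  have hS0 : (0:ℝ) ∈ S := by
    refine ⟨le_rfl, ?_⟩
    rw [hJ0]
    simpa using Real.one_rpow c ▸ (by norm_num : (0:ℝ) < 1)
  by_cases hbdd : BddAbove S
  swap
  · rw [hustar, Real.sSup_of_not_bddAbove hbdd]
    refine ⟨by norm_num, ?_⟩
    intro z hz
    exact absurd (hz.1.trans hz.2) (by norm_num)
  obtain ⟨M, hM⟩ := hbdd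
  have hM0 : 0 ≤ M := hM hS0
  -- first exit time
  set E := {t : ℝ | 0 ≤ t} ∩ {t : ℝ | (1 - t) ^ c ≤ J t} with hE_def
  have hEclosed : IsClosed E :=
    (isClosed_le continuous_const continuous_id).inter (isClosed_le hgcont hJc)
  have hEne : E.Nonempty := by
    refine ⟨M + 1, show (0:ℝ) ≤ M + 1 by linarith, ?_⟩
    show (1 - (M+1)) ^ c ≤ J (M+1)
    by_contra h
    push_neg at h
    exact absurd (hM ⟨by linarith, h⟩) (by linarith)
  set b₀ := sInf E with hb₀_def
  have hEbdd : BddBelow E := ⟨0, fun t ht => ht.1⟩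
  have hb₀E : b₀ ∈ E := hEclosed.csInf_mem hEne hEbdd
  have hb₀pos : 0 < b₀ := by
    rcases eq_or_lt_of_le (show (0:ℝ) ≤ b₀ from hb₀E.1) with h | h
    · exfalso
      have h2 : (1 - b₀) ^ c ≤ J b₀ := hb₀E.2
      rw [← h, hJ0] at h2
      simp only [sub_zero, Real.one_rpow] at h2
      linarith
    · exact h
  have hIco : ∀ u : ℝ, 0 ≤ u → u < b₀ → J u < (1 - u) ^ c := by
    intro u h0 hu
    by_contra h
    push_neg at h
    exact absurd (csInf_le hEbdd ⟨h0, h⟩) (not_le.2 hu)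
  -- Claim A : nonnegativity
  have claimA : ∀ t : ℝ, 0 ≤ t → t < b₀ → t < 1 → 0 ≤ J t := by
    by_contra hcon
    push_neg at hcon
    obtain ⟨u₁, hu₁0, hu₁b, hu₁1, hu₁neg⟩ := hcon
    set D := Icc 0 u₁ ∩ {t : ℝ | 0 ≤ J t} with hD_def
    have hDcpt : IsCompact D := isCompact_Icc.inter_right (isClosed_le continuous_const hJc)
    have hDne : D.Nonempty := ⟨0, ⟨le_rfl, hu₁0⟩, by simp [hJ0]⟩
    set t₀ := sSup D with ht₀_def
    have ht₀D : t₀ ∈ D := hDcpt.sSup_mem hDne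
    have ht₀0 : 0 ≤ t₀ := ht₀D.1.1
    have ht₀u₁ : t₀ < u₁ := by
      rcases eq_or_lt_of_le ht₀D.1.2 with h | h
      · exact absurd (h ▸ ht₀D.2) (not_le.2 hu₁neg)
      · exact h
    have hneg : ∀ t : ℝ, t₀ < t → t ≤ u₁ → J t < 0 := by
      intro t h1 h2
      by_contra h
      push_neg at h
      exact absurd (le_csSup hDcpt.bddAbove ⟨⟨ht₀0.trans h1.le, h2⟩, h⟩) (not_le.2 h1)
    have hJt₀ : J t₀ = 0 := by
      refine le_antisymm ?_ ht₀D.2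
      have hmem : Ioi t₀ ∩ Iio u₁ ∈ nhdsWithin t₀ (Ioi t₀) :=
        inter_mem_nhdsWithin _ (Iio_mem_nhds ht₀u₁)
      have hev : ∀ᶠ t in nhdsWithin t₀ (Ioi t₀), J t ≤ 0 := by
        filter_upwards [hmem] with t ht
        exact (hneg t ht.1 ht.2.le).le
      exact le_of_tendsto hJc.continuousAt.continuousWithinAt hev
    set ε := min 1 ((1 - u₁)/2) with hε_def
    have hε0 : 0 < ε := lt_min one_pos (by linarith)
    have hεpow : ε ^ (n-1) ≤ (1 - u₁)/2 :=
      le_trans (pow_le_of_le_one hε0.le (min_le_left _ _) hm) (min_le_right _ _)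
    have hev2 : ∀ᶠ t in nhds t₀, |J t| < ε := by
      have h2 : Filter.Tendsto J (nhds t₀) (nhds 0) := by
        rw [← hJt₀]; exact hJc.continuousAt
      filter_upwards [h2 (Metric.ball_mem_nhds (0:ℝ) hε0)] with t ht
      simpa [Real.dist_eq] using ht
    obtain ⟨δ, hδ0, hδ⟩ := Metric.eventually_nhds_iff.mp hev2
    set u₂ := min u₁ (t₀ + δ/2) with hu₂_def
    have hu₂1 : t₀ < u₂ := lt_min ht₀u₁ (by linarith)
    have hu₂2 : u₂ ≤ u₁ := min_le_left _ _
    have habs : ∀ t : ℝ, t₀ < t → t ≤ u₂ → |J t| < ε := by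
      intro t h1 h2
      apply hδ
      have h3 : t ≤ t₀ + δ/2 := h2.trans (min_le_right _ _)
      rw [Real.dist_eq, abs_lt]
      constructor <;> linarith
    set d := (K+1) * ((1 - u₁)/2) with hd_def
    have hd0 : 0 < d := by
      rw [hd_def]
      apply mul_pos hK1
      linarith
    have hder : ∀ t ∈ Ioo t₀ u₂,
        ∃ dv, 0 ≤ dv ∧ HasDerivAt (fun s => J s * Real.exp (-(1/d) * s)) dv t := by
      intro t ht
      have ht0 : 0 ≤ t := ht₀0.trans ht.1.le
      have htu₁ : t < u₁ := lt_of_lt_of_le ht.2 hu₂2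
      have htb : t < b₀ := htu₁.trans hu₁b
      have ht1 : t < 1 := htu₁.trans hu₁1
      have htS := hJode t ht0 (hIco t ht0 htb)
      have hJt : J t < 0 := hneg t ht.1 (ht.2.le.trans hu₂2)
      have hJabs : |J t| < ε := habs t ht.1 ht.2.le
      have hpow : J t ^ (n-1) ≤ (1 - u₁)/2 := by
        calc J t ^ (n-1) ≤ |J t ^ (n-1)| := le_abs_self _
          _ = |J t| ^ (n-1) := abs_pow _ _
          _ ≤ ε ^ (n-1) := pow_le_pow_left₀ (abs_nonneg _) hJabs.le _
          _ ≤ (1 - u₁)/2 := hεpow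
      have hdenom : d ≤ (K+1) * (1 - t - J t ^ (n-1)) := by
        apply mul_le_mul_of_nonneg_left _ hK1.le
        linarith
      have hdenpos : 0 < (K+1) * (1 - t - J t ^ (n-1)) := lt_of_lt_of_le hd0 hdenom
      have hnum : J t ≤ J t + 1 - (1-t)^c := by
        have := hgle1 t ht0 ht1.le
        linarith
      have hF : J t / d ≤ (J t + 1 - (1-t)^c) / ((K+1) * (1 - t - J t ^ (n-1))) := by
        rw [div_le_div_iff₀ hd0 hdenpos]
        calc J t * ((K+1) * (1 - t - J t ^ (n-1)))
            ≤ J t * d := mul_le_mul_of_nonpos_left hdenom hJt.le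
          _ ≤ (J t + 1 - (1-t)^c) * d := mul_le_mul_of_nonneg_right hnum hd0.le
      have hexp : HasDerivAt (fun s : ℝ => Real.exp (-(1/d) * s))
          (Real.exp (-(1/d) * t) * (-(1/d) * 1)) t :=
        (Real.hasDerivAt_exp _).comp t ((hasDerivAt_id t).const_mul (-(1/d)))
      refine ⟨_, ?_, htS.mul hexp⟩
      have hE : 0 < Real.exp (-(1/d) * t) := Real.exp_pos _
      have hkey : ((J t + 1 - (1-t)^c) / ((K+1) * (1 - t - J t ^ (n-1)))) * Real.exp (-(1/d)*t)
            + J t * (Real.exp (-(1/d)*t) * (-(1/d) * 1))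
          = ((J t + 1 - (1-t)^c) / ((K+1) * (1 - t - J t ^ (n-1))) - J t / d)
            * Real.exp (-(1/d)*t) := by
        field_simp
        ring
      rw [hkey]
      exact mul_nonneg (sub_nonneg.2 hF) hE.le
    have hφ := mono_aux (ψ := fun s => J s * Real.exp (-(1/d) * s)) hu₂1.le
      (Continuous.continuousOn (by fun_prop)) hder
    have hJu₂ : J u₂ < 0 := hneg u₂ hu₂1 hu₂2
    have hE1 : 0 < Real.exp (-(1/d) * u₂) := Real.exp_pos _
    have hφ' : J t₀ * Real.exp (-(1/d) * t₀) ≤ J u₂ * Real.exp (-(1/d) * u₂) := hφ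
    rw [hJt₀, zero_mul] at hφ'
    exact absurd hφ' (not_le.2 (mul_neg_of_neg_of_pos hJu₂ hE1))
  -- Claim strict monotone
  have claimStrict : ∀ x y : ℝ, 0 ≤ x → x < y → y < b₀ → y < 1 → J x < J y := by
    intro x y hx hxy hyb hy1
    apply strict_aux hxy hJc.continuousOn
    intro t ht
    have ht0 : 0 < t := lt_of_le_of_lt hx ht.1
    have htb : t < b₀ := ht.2.trans hyb
    have ht1 : t < 1 := ht.2.trans hy1
    have hJt := hIco t ht0.le htb
    have hJt0 : 0 ≤ J t := claimA t ht0.le htb ht1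
    refine ⟨_, ?_, hJode t ht0.le hJt⟩
    apply div_pos
    · have h1 : (1-t)^c < 1 := hglt1 t ht0 ht1.le
      linarith
    · apply mul_pos hK1
      have h3 : J t ^ (n-1) < ((1-t)^c) ^ (n-1) := pow_lt_pow_left₀ hJt hJt0 hm
      rw [hgpow t ht1.le] at h3
      linarith
  have claimMono : ∀ x y : ℝ, 0 ≤ x → x ≤ y → y < b₀ → y < 1 → J x ≤ J y := by
    intro x y hx hxy hyb hy1
    rcases eq_or_lt_of_le hxy with rfl | h
    · exact le_rfl
    · exact (claimStrict x y hx h hyb hy1).le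
  -- Claim C : b₀ < 1
  have claimC : b₀ < 1 := by
    by_contra h
    push_neg at h
    have hhalf : 0 < J (1/2 : ℝ) := by
      rw [← hJ0]
      exact claimStrict 0 (1/2) le_rfl (by norm_num) (by linarith) (by norm_num)
    set q := J (1/2 : ℝ) ^ (n - 1) with hq_def
    have hq0 : 0 < q := pow_pos hhalf _
    set r := min (1/2 : ℝ) (q/2) with hr_def
    have hr0 : 0 < r := lt_min (by norm_num) (by linarith)
    set u₁ := 1 - r with hu₁_def
    have hu₁lt1 : u₁ < 1 := by rw [hu₁_def]; linarith
    have hu₁half : 1/2 ≤ u₁ := by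
      have := min_le_left (1/2 : ℝ) (q/2)
      rw [hu₁_def, hr_def]
      linarith
    have hqc : q ^ c = J (1/2 : ℝ) := by
      rw [hq_def, ← Real.rpow_natCast (J (1/2:ℝ)) (n-1), ← Real.rpow_mul hhalf.le, hcast,
        mul_comm, hcm, Real.rpow_one]
    have hg : (1 - u₁)^c < J (1/2 : ℝ) := by
      have h2 : r < q := lt_of_le_of_lt (min_le_right _ _) (by linarith)
      have h3 : r ^ c < q ^ c := Real.rpow_lt_rpow hr0.le h2 hc0
      have h4 : (1 - u₁ : ℝ) = r := by rw [hu₁_def]; ring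
      rw [h4, ← hqc]
      exact h3
    have hmono' : J (1/2 : ℝ) ≤ J u₁ := claimMono (1/2) u₁ (by norm_num) hu₁half
      (lt_of_lt_of_le hu₁lt1 h) hu₁lt1
    have := hIco u₁ (by linarith) (lt_of_lt_of_le hu₁lt1 h)
    linarith
  -- Claim D : S has no points above b₀
  have claimD : ∀ w : ℝ, w ∈ S → w ≤ b₀ := by
    intro w hw
    by_contra hcon
    push_neg at hcon
    -- left endpoint construction
    set A := Icc b₀ w ∩ {t : ℝ | (1 - t) ^ c ≤ J t} with hA_def
    have hAcpt : IsCompact A := isCompact_Icc.inter_right (isClosed_le hgcont hJc)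
    have hAne : A.Nonempty := ⟨b₀, ⟨le_rfl, hcon.le⟩, hb₀E.2⟩
    set a := sSup A with ha_def
    have haA : a ∈ A := hAcpt.sSup_mem hAne
    have haw : a < w := by
      rcases eq_or_lt_of_le haA.1.2 with h | h
      · exact absurd (h ▸ haA.2) (not_le.2 hw.2)
      · exact h
    have hlt : ∀ t : ℝ, a < t → t ≤ w → J t < (1 - t) ^ c := by
      intro t h1 h2
      by_contra h
      push_neg at h
      exact absurd (le_csSup hAcpt.bddAbove ⟨⟨haA.1.1.trans h1.le, h2⟩, h⟩) (not_le.2 h1)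
    have haeq : J a = (1 - a) ^ c := by
      refine le_antisymm ?_ haA.2
      have hmem : Ioi a ∩ Iio w ∈ nhdsWithin a (Ioi a) :=
        inter_mem_nhdsWithin _ (Iio_mem_nhds haw)
      have hev : ∀ᶠ t in nhdsWithin a (Ioi a), J t - (1 - t) ^ c ≤ 0 := by
        filter_upwards [hmem] with t ht
        have := hlt t ht.1 ht.2.le
        linarith
      have htd : Filter.Tendsto (fun t => J t - (1 - t) ^ c) (nhdsWithin a (Ioi a))
          (nhds (J a - (1 - a) ^ c)) := ((hJc.sub hgcont).continuousAt).continuousWithinAt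
      have := le_of_tendsto htd hev
      linarith
    have ha0 : 0 < a := lt_of_lt_of_le hb₀pos haA.1.1
    rcases lt_or_ge a 1 with ha1 | ha1
    · -- left endpoint a with a < 1 : contradiction (uniform in n)
      have hJapos : 0 < J a := by rw [haeq]; exact hgpos a ha1
      have hev : ∀ᶠ t in nhds a, 0 < J t ∧ t < 1 := by
        have h1 : ∀ᶠ t in nhds a, 0 < J t := hJc.continuousAt (Ioi_mem_nhds hJapos)
        have h2 : ∀ᶠ t in nhds a, t < 1 := eventually_lt_nhds ha1
        exact h1.and h2
      obtain ⟨δ₁, hδ₁0, hδ₁⟩ := Metric.eventually_nhds_iff.mp hev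
      set x := a + min (δ₁/2) ((w - a)/2) with hx_def
      have hminpos : 0 < min (δ₁/2) ((w - a)/2) := lt_min (by linarith) (by linarith)
      have hax : a < x := by rw [hx_def]; linarith
      have hxw : x ≤ w := by
        have := min_le_right (δ₁/2) ((w - a)/2)
        rw [hx_def]; linarith
      have hψ : ∀ t ∈ Ioo a x, ∃ dv, 0 < dv ∧
          HasDerivAt (fun s => J s - (1 - s) ^ c) dv t := by
        intro t ht
        have htd : dist t a < δ₁ := by
          have h1 : t - a < min (δ₁/2) ((w-a)/2) := by
            have := ht.2; rw [hx_def] at this; linarith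
          have h2 := min_le_left (δ₁/2) ((w - a)/2)
          rw [Real.dist_eq, abs_lt]
          constructor <;> [linarith [ht.1]; linarith]
        obtain ⟨hJtpos, ht1⟩ := hδ₁ htd
        have hJt : J t < (1 - t) ^ c := hlt t ht.1 (ht.2.le.trans hxw)
        have hode := hJode t (ha0.le.trans ht.1.le) hJt
        have hgd : HasDerivAt (fun s : ℝ => (1 - s) ^ c) (c * (1-t)^(c-1) * (-1)) t := by
          have h1 : HasDerivAt (fun s : ℝ => 1 - s) (-1) t := (hasDerivAt_id t).const_sub 1
          exact (Real.hasDerivAt_rpow_const (Or.inl ((by linarith : (0:ℝ) < 1-t).ne'))).comp t h1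
        refine ⟨_, ?_, hode.sub hgd⟩
        have hnum : 0 < J t + 1 - (1-t)^c := by
          have := hglt1 t (lt_of_le_of_lt (by linarith) ht.1) ht1.le
          linarith
        have hden : 0 < (K+1) * (1 - t - J t ^ (n-1)) := by
          apply mul_pos hK1
          have h3 : J t ^ (n-1) < ((1-t)^c) ^ (n-1) := pow_lt_pow_left₀ hJt hJtpos.le hm
          rw [hgpow t ht1.le] at h3
          linarith
        have h5 : 0 < (1-t)^(c-1) := Real.rpow_pos_of_pos (by linarith) _
        have h6 : 0 < (J t + 1 - (1-t)^c) / ((K+1) * (1 - t - J t ^ (n-1))) :=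
          div_pos hnum hden
        nlinarith
      have hcontr : J a - (1-a)^c < J x - (1-x)^c :=
        strict_aux hax ((hJc.sub hgcont).continuousOn) hψ
      have h1 : J x < (1 - x)^c := hlt x hax hxw
      rw [show J a - (1-a)^c = 0 by rw [haeq]; ring] at hcontr
      linarith
    · -- a ≥ 1 : there is a point of S above 1
      exfalso
      -- we get w' > 1 with J w' < (1-w')^c  (note w > a ≥ 1)
      have hw1 : 1 < w := lt_of_le_of_lt ha1 haw
      -- rule out n = 2 : in that case left endpoint argument works at a anyway
      rcases eq_or_lt_of_le hn with hn2 | hn3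
      · -- n = 2
        have hc_eq : c = 1 := by rw [hc_def, ← hn2]; norm_num
        have hm1 : n - 1 = 1 := by omega
        have hnum_ev : ∀ᶠ t in nhds a, 0 < J t + 1 - (1 - t) ^ c := by
          have hcontnum : ContinuousAt (fun t : ℝ => J t + 1 - (1 - t) ^ c) a :=
            ((hJc.add continuous_const).sub hgcont).continuousAt
          have hval : 0 < J a + 1 - (1 - a) ^ c := by rw [haeq]; norm_num
          exact hcontnum (Ioi_mem_nhds hval)
        obtain ⟨δ₁, hδ₁0, hδ₁⟩ := Metric.eventually_nhds_iff.mp hnum_ev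
        set x := a + min (δ₁/2) ((w - a)/2) with hx_def
        have hminpos : 0 < min (δ₁/2) ((w - a)/2) := lt_min (by linarith) (by linarith)
        have hax : a < x := by rw [hx_def]; linarith
        have hxw : x ≤ w := by
          have := min_le_right (δ₁/2) ((w - a)/2)
          rw [hx_def]; linarith
        have hψ : ∀ t ∈ Ioo a x, ∃ dv, 0 < dv ∧
            HasDerivAt (fun s => J s - (1 - s) ^ c) dv t := by
          intro t ht
          have htd : dist t a < δ₁ := by
            have h1 : t - a < min (δ₁/2) ((w-a)/2) := by
              have := ht.2; rw [hx_def] at this; linarith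
            have h2 := min_le_left (δ₁/2) ((w - a)/2)
            rw [Real.dist_eq, abs_lt]
            constructor <;> [linarith [ht.1]; linarith]
          have hnum := hδ₁ htd
          have hJt : J t < (1 - t) ^ c := hlt t ht.1 (ht.2.le.trans hxw)
          have hode := hJode t (ha0.le.trans ht.1.le) hJt
          have hgd : HasDerivAt (fun s : ℝ => (1 - s) ^ c) (c * (1-t)^(c-1) * (-1)) t := by
            have h1 : HasDerivAt (fun s : ℝ => 1 - s) (-1) t := (hasDerivAt_id t).const_sub 1
            exact (Real.hasDerivAt_rpow_const (Or.inr hc_eq.ge)).comp t h1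
          refine ⟨_, ?_, hode.sub hgd⟩
          have hgterm : c * (1-t)^(c-1) * (-1) = -1 := by
            rw [hc_eq]
            norm_num
          have hden : 0 < (K+1) * (1 - t - J t ^ (n-1)) := by
            apply mul_pos hK1
            rw [hm1, pow_one]
            rw [hc_eq, Real.rpow_one] at hJt
            linarith
          have h6 : 0 < (J t + 1 - (1-t)^c) / ((K+1) * (1 - t - J t ^ (n-1))) :=
            div_pos hnum hden
          rw [hgterm]
          linarith
        have hcontr : J a - (1-a)^c < J x - (1-x)^c :=
          strict_aux hax ((hJc.sub hgcont).continuousOn) hψ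
        have h1 : J x < (1 - x)^c := hlt x hax hxw
        rw [show J a - (1-a)^c = 0 by rw [haeq]; ring] at hcontr
        linarith
      · -- n ≥ 3 : right endpoint argument
        have hn3' : 3 ≤ n := hn3
        have hn3R : (3:ℝ) ≤ (n:ℝ) := by exact_mod_cast hn3'
        have hchalf : c ≤ 1/2 := by
          rw [hc_def]
          have : ((n:ℝ)-1)⁻¹ ≤ (2:ℝ)⁻¹ := inv_anti₀ (by norm_num) (by linarith)
          linarith
        have hcos : 0 ≤ Real.cos (c * Real.pi) := by
          apply Real.cos_nonneg_of_mem_Icc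
          constructor
          · nlinarith [Real.pi_pos, hc0]
          · nlinarith [Real.pi_pos]
        -- the set of exit points above w
        set B := {t : ℝ | w ≤ t} ∩ {t : ℝ | (1 - t) ^ c ≤ J t} with hB_def
        have hBclosed : IsClosed B :=
          (isClosed_le continuous_const continuous_id).inter (isClosed_le hgcont hJc)
        have hBne : B.Nonempty := by
          by_contra hemp
          rw [not_nonempty_iff_eq_empty] at hemp
          have hmx : max w (M+1) ∈ S := by
            refine ⟨by positivity, ?_⟩
            by_contra h
            push_neg at h
            have : max w (M+1) ∈ B := ⟨(le_max_left w (M+1) : w ≤ max w (M+1)), h⟩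
            rw [hemp] at this
            exact this
          have := hM hmx
          have := le_max_right w (M+1)
          linarith
        set b := sInf B with hb_def
        have hBbdd : BddBelow B := ⟨w, fun t ht => ht.1⟩
        have hbB : b ∈ B := hBclosed.csInf_mem hBne hBbdd
        have hwb : w < b := by
          rcases eq_or_lt_of_le (show w ≤ b from hbB.1) with h | h
          · exact absurd (h ▸ hbB.2) (not_le.2 hw.2)
          · exact h
        have hltb : ∀ t : ℝ, w ≤ t → t < b → J t < (1 - t) ^ c := by
          intro t h1 h2
          by_contra h
          push_neg at h
          exact absurd (csInf_le hBbdd ⟨h1, h⟩) (not_le.2 h2)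
        have hbeq : J b = (1 - b) ^ c := by
          refine le_antisymm ?_ hbB.2
          have hmem : Iio b ∩ Ioi w ∈ nhdsWithin b (Iio b) :=
            inter_mem_nhdsWithin _ (Ioi_mem_nhds hwb)
          have hev : ∀ᶠ t in nhdsWithin b (Iio b), J t - (1 - t) ^ c ≤ 0 := by
            filter_upwards [hmem] with t ht
            have := hltb t ht.2.le ht.1
            linarith
          have htd : Filter.Tendsto (fun t => J t - (1 - t) ^ c) (nhdsWithin b (Iio b))
              (nhds (J b - (1 - b) ^ c)) := ((hJc.sub hgcont).continuousAt).continuousWithinAt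
          have := le_of_tendsto htd hev
          linarith
        have hb1 : 1 < b := hw1.trans hwb
        have hpowb : ((1-b)^c)^(n-1) = (b-1) * Real.cos (c*Real.pi)^(n-1) := by
          have h1 : (1-b:ℝ) < 0 := by linarith
          rw [Real.rpow_def_of_neg h1, show (1-b:ℝ) = -(b-1) by ring, Real.log_neg_eq_log,
            mul_pow, ← Real.exp_nat_mul]
          have h2 : ((n-1:ℕ):ℝ) * (Real.log (b-1) * c) = Real.log (b-1) := by
            rw [hcast, show ((n:ℝ)-1) * (Real.log (b-1) * c)
              = Real.log (b-1) * (c * ((n:ℝ)-1)) from by ring, hcm, mul_one]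
          rw [h2, Real.exp_log (by linarith)]
        have hdenomb : (K+1) * (1 - b - J b ^ (n-1)) < 0 := by
          rw [hbeq, hpowb]
          have hcp : 0 ≤ (b-1) * Real.cos (c*Real.pi) ^ (n-1) :=
            mul_nonneg (by linarith) (pow_nonneg hcos _)
          exact mul_neg_of_pos_of_neg hK1 (by linarith)
        have hev2 : ∀ᶠ t in nhds b,
            (K+1) * (1 - t - J t ^ (n-1)) < 0 ∧ 0 < J t + 1 - (1 - t) ^ c := by
          have h1 : ∀ᶠ t in nhds b, (K+1) * (1 - t - J t ^ (n-1)) < 0 := by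
            have hcont1 : ContinuousAt (fun t : ℝ => (K+1) * (1 - t - J t ^ (n-1))) b := by
              fun_prop
            exact hcont1 (Iio_mem_nhds hdenomb)
          have h2 : ∀ᶠ t in nhds b, 0 < J t + 1 - (1 - t) ^ c := by
            have hcont2 : ContinuousAt (fun t : ℝ => J t + 1 - (1 - t) ^ c) b :=
              ((hJc.add continuous_const).sub hgcont).continuousAt
            have hval : 0 < J b + 1 - (1 - b) ^ c := by rw [hbeq]; norm_num
            exact hcont2 (Ioi_mem_nhds hval)
          exact h1.and h2
        obtain ⟨δ₁, hδ₁0, hδ₁⟩ := Metric.eventually_nhds_iff.mp hev2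
        set x := b - min (δ₁/2) ((b - w)/2) with hx_def
        have hminpos : 0 < min (δ₁/2) ((b - w)/2) := lt_min (by linarith) (by linarith)
        have hxb : x < b := by rw [hx_def]; linarith
        have hwx : w ≤ x := by
          have := min_le_right (δ₁/2) ((b - w)/2)
          rw [hx_def]; linarith
        have hψ : ∀ t ∈ Ioo x b, ∃ dv, 0 ≤ dv ∧
            HasDerivAt (fun s => (1 - s) ^ c - J s) dv t := by
          intro t ht
          have htd : dist t b < δ₁ := by
            have h1 : b - t < min (δ₁/2) ((b - w)/2) := by
              have := ht.1; rw [hx_def] at this; linarith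
            have h2 := min_le_left (δ₁/2) ((b - w)/2)
            rw [Real.dist_eq, abs_lt]
            constructor <;> [linarith [ht.2]; linarith [ht.2]]
          obtain ⟨hden, hnum⟩ := hδ₁ htd
          have hwt : w ≤ t := hwx.trans ht.1.le
          have ht1 : 1 < t := lt_of_lt_of_le hw1 hwt
          have hJt : J t < (1 - t) ^ c := hltb t hwt ht.2
          have hode := hJode t (by linarith) hJt
          have hgd : HasDerivAt (fun s : ℝ => (1 - s) ^ c) (c * (1-t)^(c-1) * (-1)) t := by
            have h1 : HasDerivAt (fun s : ℝ => 1 - s) (-1) t := (hasDerivAt_id t).const_sub 1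
            exact (Real.hasDerivAt_rpow_const (Or.inl (by linarith : (1-t:ℝ) ≠ 0))).comp t h1
          refine ⟨_, ?_, hgd.sub hode⟩
          have hJ'neg : (J t + 1 - (1-t)^c) / ((K+1) * (1 - t - J t ^ (n-1))) < 0 :=
            div_neg_of_pos_of_neg hnum hden
          have hgd0 : 0 ≤ c * (1-t)^(c-1) * (-1) := by
            have h1 : (1-t:ℝ)^(c-1) ≤ 0 := by
              rw [Real.rpow_def_of_neg (by linarith : (1-t:ℝ) < 0)]
              have h2 : Real.cos ((c-1)*Real.pi) = - Real.cos (c*Real.pi) := by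
                rw [show (c-1)*Real.pi = c*Real.pi - Real.pi by ring, Real.cos_sub_pi]
              rw [h2]
              have h3 := Real.exp_pos (Real.log (1-t) * (c-1))
              nlinarith
            nlinarith
          linarith
        have hfin : (1-x)^c - J x ≤ (1-b)^c - J b :=
          mono_aux hxb.le ((hgcont.sub hJc).continuousOn) hψ
        have hx' : J x < (1-x)^c := hltb x hwx hxb
        have hb' : (1-b)^c - J b = 0 := by rw [hbeq]; ring
        rw [hb'] at hfin
        linarith
  -- sup of S is b₀
  have hSbdd : BddAbove S := ⟨M, hM⟩
  have hsup : sSup S = b₀ := by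
    apply le_antisymm (csSup_le ⟨0, hS0⟩ claimD)
    by_contra h
    push_neg at h
    have h0le : 0 ≤ sSup S := le_csSup hSbdd hS0
    set v := (sSup S + b₀) / 2 with hv_def
    have hv1 : sSup S < v := by rw [hv_def]; linarith
    have hv2 : v < b₀ := by rw [hv_def]; linarith
    have hvS : v ∈ S := ⟨by linarith, hIco v (by linarith) hv2⟩
    exact absurd (le_csSup hSbdd hvS) (not_le.2 hv1)
  rw [hustar, hsup]
  refine ⟨claimC, ?_⟩
  intro z hz
  obtain ⟨hz1, hz2⟩ := hz
  have hu0 : 0 < 1 - z := by linarith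
  have hub : 1 - z < b₀ := by linarith
  have hu1 : 1 - z < 1 := hub.trans claimC
  have hJu0 : 0 ≤ J (1 - z) := claimA (1-z) hu0.le hub hu1
  have hbound : J (1 - z) ^ (n-1) ≤ 1 - b₀ := by
    by_contra h
    push_neg at h
    set q := J (1 - z) ^ (n-1) with hq_def
    set v := max ((1 - z + b₀)/2) ((1 - q + b₀)/2) with hv_def
    have hv1 : 1 - z < v := lt_of_lt_of_le (by linarith) (le_max_left _ _)
    have hv2 : v < b₀ := max_lt (by linarith) (by linarith)
    have hv3 : 1 - q < v := lt_of_lt_of_le (by linarith) (le_max_right _ _)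
    have hv0 : 0 ≤ v := hu0.le.trans hv1.le
    have hv1' : v < 1 := hv2.trans claimC
    have hJv : J v < (1-v)^c := hIco v hv0 hv2
    have hJv0 : 0 ≤ J v := claimA v hv0 hv2 hv1'
    have h1 : q ≤ J v ^ (n-1) :=
      pow_le_pow_left₀ hJu0 (claimMono (1-z) v hu0.le hv1.le hv2 hv1') _
    have h2 : J v ^ (n-1) < ((1-v)^c) ^ (n-1) := pow_lt_pow_left₀ hJv hJv0 hm
    rw [hgpow v hv1'.le] at h2
    linarith
  have hzpos : 0 < z - (1 - b₀) := by linarith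
  have hden2 : 0 < z - J (1 - z) ^ (n-1) := by linarith
  constructor
  · exact div_pos hK (mul_pos hK1 hden2)
  · apply div_le_div_of_nonneg_left hK.le (mul_pos hK1 hzpos)
    apply mul_le_mul_of_nonneg_left _ hK1.le
    linarith
end

section
/- Let K > 0 and r > 0, and let φ : [x₀, r] → ℝ with φ(r) = r (where φ here denotes the function φ(y) = y - (original φ)(y) of the 2-player contest, written as varphi) satisfy the ODE varphi(y)·varphi'(y) = -K·varphi(y) + r·(K+1) on (x₀, r), with varphi(x₀) = 0 and varphi(r) = r. Then for y ∈ [x₀, r], y = x₀ - varphi(y)/K - (x₀/(K - ln(1+K)))·ln(1 - varphi(y)·(K - ln(1+K))/(K·x₀)), and r = x₀·K²/((K+1)·(K - ln(1+K))). -/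
open Set

/-- 2-player contest: if `varphi` solves
`varphi varphi' = -K varphi + r(K+1)` on `(x₀,r)` with `varphi(x₀) = 0`, `varphi(r) = r`,
then the implicit solution
`y = x₀ - varphi(y)/K - (x₀/(K - ln(1+K))) ln(1 - varphi(y)(K - ln(1+K))/(K x₀))` holds on
`[x₀,r]` and `r = x₀ K²/((K+1)(K - ln(1+K)))`. -/
theorem stmt_16 (K x₀ r : ℝ) (hK : 0 < K) (hx₀ : 0 < x₀) (hr : x₀ < r)
    (varphi varphi' : ℝ → ℝ)
    (hc : ContinuousOn varphi (Set.Icc x₀ r))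
    (hmono : StrictMonoOn varphi (Set.Icc x₀ r))
    (hd : ∀ y ∈ Set.Ioo x₀ r, HasDerivAt varphi (varphi' y) y)
    (hode : ∀ y ∈ Set.Ioo x₀ r, varphi y * varphi' y = -K * varphi y + r * (K + 1))
    (h0 : varphi x₀ = 0) (hrr : varphi r = r) :
    (∀ y ∈ Set.Icc x₀ r,
        y = x₀ - varphi y / K -
          (x₀ / (K - Real.log (1 + K))) *
            Real.log (1 - varphi y * (K - Real.log (1 + K)) / (K * x₀))) ∧
      r = x₀ * K ^ 2 / ((K + 1) * (K - Real.log (1 + K))) := by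
  have hr0 : 0 < r := lt_trans hx₀ hr
  set A : ℝ := r * (K + 1) with hA_def
  have hA : 0 < A := by positivity
  set L : ℝ := K - Real.log (1 + K) with hL_def
  have hL : 0 < L := by
    have : Real.log (1 + K) < (1 + K) - 1 :=
      Real.log_lt_sub_one_of_pos (by linarith) (by linarith)
    simp only [hL_def]; linarith
  -- bounds on varphi
  have hub : ∀ y ∈ Set.Icc x₀ r, varphi y ≤ r := by
    intro y hy
    have := hmono.monotoneOn hy (right_mem_Icc.2 (le_of_lt hr)) hy.2
    rwa [hrr] at this
  have hpos : ∀ y ∈ Set.Icc x₀ r, 0 < A - K * varphi y := by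
    intro y hy
    have h1 : K * varphi y ≤ K * r := by
      exact mul_le_mul_of_nonneg_left (hub y hy) (le_of_lt hK)
    have : A - K * r = r := by rw [hA_def]; ring
    nlinarith
  have hphipos : ∀ y ∈ Set.Ioo x₀ r, 0 < varphi y := by
    intro y hy
    have := hmono (left_mem_Icc.2 (le_of_lt hr)) ⟨le_of_lt hy.1, le_of_lt hy.2⟩ hy.1
    rwa [h0] at this
  -- the conserved quantity
  set G : ℝ → ℝ := fun y => y + varphi y / K + (A / K ^ 2) * Real.log (A - K * varphi y)
    with hG_def
  have hGc : ContinuousOn G (Set.Icc x₀ r) := by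
    apply ContinuousOn.add
    · exact (continuousOn_id).add (hc.div_const K)
    · exact continuousOn_const.mul ((continuousOn_const.sub
        (continuousOn_const.mul hc)).log (fun y hy => ne_of_gt (hpos y hy)))
  have hGd : ∀ y ∈ Set.Ioo x₀ r, HasDerivAt G 0 y := by
    intro y hy
    have hyI : y ∈ Set.Icc x₀ r := ⟨le_of_lt hy.1, le_of_lt hy.2⟩
    have hdy := hd y hy
    have h1 : HasDerivAt (fun z => A - K * varphi z) (-(K * varphi' y)) y := by
      exact (hdy.const_mul K).const_sub A
    have h2 := (h1.log (ne_of_gt (hpos y hyI))).const_mul (A / K ^ 2)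
    have hodey := hode y hy
    have hp := hphipos y hy
    have hq := hpos y hyI
    have hD : 1 + varphi' y / K + A / K ^ 2 * (-(K * varphi' y) / (A - K * varphi y)) = 0 := by
      field_simp
      rw [hA_def] at hodey
      linear_combination (-K) * hodey
    have h3 := ((hasDerivAt_id y).add (hdy.div_const K)).add h2
    rw [hD] at h3
    exact h3
  have hconst : ∀ y ∈ Set.Icc x₀ r, G y = G x₀ := by
    intro y hy
    rcases eq_or_lt_of_le hy.1 with h | h
    · rw [← h]
    · obtain ⟨c, hc1, hc2⟩ := exists_hasDerivAt_eq_slope G (fun _ => 0) h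
        (hGc.mono (Icc_subset_Icc le_rfl hy.2))
        (fun z hz => hGd z ⟨hz.1, lt_of_lt_of_le hz.2 hy.2⟩)
      have : (G y - G x₀) / (y - x₀) = 0 := hc2.symm
      have hne : y - x₀ ≠ 0 := by linarith
      field_simp at this
      linarith
  have hGx₀ : G x₀ = x₀ + (A / K ^ 2) * Real.log A := by
    simp [hG_def, h0]
  -- key identity
  have key : ∀ y ∈ Set.Icc x₀ r,
      y + varphi y / K + (A / K ^ 2) * Real.log (A - K * varphi y)
        = x₀ + (A / K ^ 2) * Real.log A := by
    intro y hy
    have := hconst y hy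
    rw [hGx₀] at this
    exact this
  -- r formula
  have hrIcc : r ∈ Set.Icc x₀ r := right_mem_Icc.2 (le_of_lt hr)
  have hkeyr := key r hrIcc
  rw [hrr] at hkeyr
  have hAr : A - K * r = r := by rw [hA_def]; ring
  rw [hAr] at hkeyr
  have hlogA : Real.log A = Real.log r + Real.log (1 + K) := by
    rw [hA_def, Real.log_mul (ne_of_gt hr0) (by positivity)]
    ring_nf
  rw [hlogA] at hkeyr
  -- hkeyr : r + r/K + (A/K²) log r = x₀ + (A/K²)(log r + log(1+K))
  have hrform : r = x₀ * K ^ 2 / ((K + 1) * L) := by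
    have hK2 : (K:ℝ) ^ 2 ≠ 0 := by positivity
    rw [eq_div_iff (by positivity)]
    have : r + r / K - (A / K ^ 2) * Real.log (1 + K) = x₀ := by
      have := hkeyr; ring_nf at this ⊢; nlinarith [this]
    rw [hL_def, hA_def] at *
    field_simp at this ⊢
    nlinarith [this]
  refine ⟨?_, hrform⟩
  intro y hy
  have hA_eq : A = x₀ * K ^ 2 / L := by
    rw [hA_def, hrform]; field_simp
  have hAK2 : A / K ^ 2 = x₀ / L := by rw [hA_eq]; field_simp
  have harg : 1 - varphi y * L / (K * x₀) = (A - K * varphi y) / A := by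
    rw [hA_eq]; field_simp
  have hlogdiv : Real.log ((A - K * varphi y) / A)
      = Real.log (A - K * varphi y) - Real.log A :=
    Real.log_div (ne_of_gt (hpos y hy)) (ne_of_gt hA)
  have hk := key y hy
  rw [hAK2] at hk
  rw [hL_def] at *
  rw [harg, hlogdiv]
  linear_combination hk
end

section
/- Let K > 0 and ψ : [x₀, r] → ℝ twice differentiable with ψ' > 0, ψ'' > 0 on (x₀, r), and let φ(y) = y - K·ψ'(y)/ψ''(y) with φ'·ψ'(y)/(K+1) = θ'(y) for θ(y) = ψ(y) - (y-φ(y))ψ'(y)/(K+1). Fix y ∈ [x₀, r] and define L(x) = (1+K)·(ψ(x) - ψ(y)) + (y - x)·ψ'(y) for x ∈ [0, y], where ψ is extended to [0, x₀) by ψ(x) = θ(φ^{-1}(x)). Suppose ψ' > 0 on (0,r), ψ'' < 0 on (0, x₀), ψ'' > 0 on (x₀, y), ψ'(φ(y)) = ψ'(y)/(K+1), and L(φ(y)) = L(y) = 0. Then L(x) ≤ 0 for all x ∈ [0, y], with L(x) < 0 for x ∉ {φ(y), y}. -/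
open Set

/-- for fixed `y ∈ (x₀, r]`, the function
`L(x) = (1+K)(ψ(x) - ψ(y)) + (y - x) ψ'(y)` (with `ψ` extended below `x₀` so that it is
increasing, concave on `(0,x₀)` and convex on `(x₀,y)`, and `ψ'(φ(y)) = ψ'(y)/(K+1)`)
satisfies `L ≤ 0` on `[0,y]`, with strict inequality off `{φ(y), y}`, given
`L(φ(y)) = L(y) = 0`. -/
theorem stmt_18 (K : ℝ) (hK : 0 < K) (x₀ r y : ℝ) (hx₀ : 0 < x₀) (hr : x₀ < r)
    (hy : y ∈ Set.Ioc x₀ r)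
    (ψ ψ' ψ'' : ℝ → ℝ)
    (hψc : ContinuousOn ψ (Set.Icc 0 y))
    (hψd : ∀ x ∈ Set.Ioo (0:ℝ) x₀ ∪ Set.Ioo x₀ y, HasDerivAt ψ (ψ' x) x)
    (hψ'd : ∀ x ∈ Set.Ioo (0:ℝ) x₀ ∪ Set.Ioo x₀ y, HasDerivAt ψ' (ψ'' x) x)
    (hψ'pos : ∀ x ∈ Set.Ioo (0:ℝ) x₀ ∪ Set.Ioo x₀ y, 0 < ψ' x)
    (hψ''neg : ∀ x ∈ Set.Ioo (0:ℝ) x₀, ψ'' x < 0)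
    (hψ''pos : ∀ x ∈ Set.Ioo x₀ y, 0 < ψ'' x)
    (hψ'y : 0 < ψ' y)
    (φy : ℝ) (hφy : φy ∈ Set.Ioo (0:ℝ) x₀)
    (hslope : ψ' φy = ψ' y / (K + 1))
    (L : ℝ → ℝ)
    (hL : ∀ x, L x = (1 + K) * (ψ x - ψ y) + (y - x) * ψ' y)
    (hLφy : L φy = 0) (hLy : L y = 0) :
    ∀ x ∈ Set.Icc (0:ℝ) y, L x ≤ 0 ∧ (x ≠ φy → x ≠ y → L x < 0) := by
  obtain ⟨hx₀y, hyr⟩ := hy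
  obtain ⟨hφy0, hφyx₀⟩ := hφy
  have hK1 : (0:ℝ) < K + 1 := by linarith
  have hLf : L = fun x => (1 + K) * (ψ x - ψ y) + (y - x) * ψ' y := funext hL
  -- derivative of L
  set g : ℝ → ℝ := fun x => (1 + K) * ψ' x - ψ' y with hg
  have hLd : ∀ x ∈ Set.Ioo (0:ℝ) x₀ ∪ Set.Ioo x₀ y, HasDerivAt L (g x) x := by
    intro x hx
    have h1 := ((hψd x hx).sub_const (ψ y)).const_mul (1 + K)
    have h2 : HasDerivAt (fun x : ℝ => (y - x) * ψ' y) (-ψ' y) x := by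
      simpa using ((hasDerivAt_id x).const_sub y).mul_const (ψ' y)
    have := h1.add h2
    rw [hLf]
    simpa [hg, sub_eq_add_neg, Pi.add_def] using this
  have hgd : ∀ x ∈ Set.Ioo (0:ℝ) x₀ ∪ Set.Ioo x₀ y, HasDerivAt g ((1 + K) * ψ'' x) x := by
    intro x hx
    exact ((hψ'd x hx).const_mul (1 + K)).sub_const (ψ' y)
  have hgφy : g φy = 0 := by
    simp only [hg, hslope]
    field_simp
    ring
  -- g is strictly decreasing on (0, x₀)
  have hganti : StrictAntiOn g (Set.Ioo 0 x₀) := by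
    apply strictAntiOn_of_deriv_neg (convex_Ioo _ _)
    · intro x hx
      exact (hgd x (Or.inl hx)).continuousAt.continuousWithinAt
    · intro x hx
      rw [interior_Ioo] at hx
      rw [(hgd x (Or.inl hx)).deriv]
      have := hψ''neg x hx
      nlinarith
  -- L continuous on [0,y]
  have hLc : ContinuousOn L (Set.Icc 0 y) := by
    rw [hLf]
    exact ((hψc.sub continuousOn_const).const_smul (1+K)).add
      ((continuousOn_const.sub continuousOn_id).mul continuousOn_const)
  have hφy_mem : φy ∈ Set.Icc (0:ℝ) y := ⟨hφy0.le, by linarith⟩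
  have hx₀_mem : x₀ ∈ Set.Icc (0:ℝ) y := ⟨hx₀.le, hx₀y.le⟩
  -- L strictly increasing on [0, φy]
  have hmono : StrictMonoOn L (Set.Icc 0 φy) := by
    apply strictMonoOn_of_deriv_pos (convex_Icc _ _)
    · exact hLc.mono (Set.Icc_subset_Icc_right (by linarith))
    · intro x hx
      rw [interior_Icc] at hx
      have hx' : x ∈ Set.Ioo (0:ℝ) x₀ := ⟨hx.1, hx.2.trans hφyx₀⟩
      rw [(hLd x (Or.inl hx')).deriv]
      have := hganti hx' ⟨hφy0, hφyx₀⟩ hx.2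
      linarith [hgφy ▸ this]
  -- L strictly decreasing on [φy, x₀]
  have hanti : StrictAntiOn L (Set.Icc φy x₀) := by
    apply strictAntiOn_of_deriv_neg (convex_Icc _ _)
    · exact hLc.mono (Set.Icc_subset_Icc hφy0.le hx₀y.le)
    · intro x hx
      rw [interior_Icc] at hx
      have hx' : x ∈ Set.Ioo (0:ℝ) x₀ := ⟨hφy0.trans hx.1, hx.2⟩
      rw [(hLd x (Or.inl hx')).deriv]
      have := hganti ⟨hφy0, hφyx₀⟩ hx' hx.1
      linarith [hgφy ▸ this]
  have hLx₀ : L x₀ < 0 := by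
    have := hanti (Set.left_mem_Icc.2 hφyx₀.le) (Set.right_mem_Icc.2 hφyx₀.le) hφyx₀
    rwa [hLφy] at this
  -- L strictly convex on [x₀, y]
  have hconv : StrictConvexOn ℝ (Set.Icc x₀ y) L := by
    apply StrictMonoOn.strictConvexOn_of_deriv (convex_Icc _ _)
      (hLc.mono (Set.Icc_subset_Icc_left hx₀.le))
    rw [interior_Icc]
    have heq : Set.EqOn (deriv L) g (Set.Ioo x₀ y) := fun x hx =>
      (hLd x (Or.inr hx)).deriv
    apply StrictMonoOn.congr _ heq.symm
    apply strictMonoOn_of_deriv_pos (convex_Ioo _ _)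
    · intro x hx
      exact (hgd x (Or.inr hx)).continuousAt.continuousWithinAt
    · intro x hx
      rw [interior_Ioo] at hx
      rw [(hgd x (Or.inr hx)).deriv]
      have := hψ''pos x hx
      nlinarith
  -- conclude
  have key : ∀ x ∈ Set.Icc (0:ℝ) y, x ≠ φy → x ≠ y → L x < 0 := by
    intro x ⟨hx0, hxy⟩ hne1 hne2
    rcases lt_trichotomy x φy with h | h | h
    · have := hmono ⟨hx0, h.le⟩ (Set.right_mem_Icc.2 (by linarith)) h
      rwa [hLφy] at this
    · exact absurd h hne1
    · rcases le_or_gt x x₀ with h2 | h2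
      · have := hanti (Set.left_mem_Icc.2 (by linarith)) ⟨h.le, h2⟩ h
        rwa [hLφy] at this
      · have hxy' : x < y := lt_of_le_of_ne hxy hne2
        set a : ℝ := (y - x) / (y - x₀) with ha
        set b : ℝ := (x - x₀) / (y - x₀) with hb
        have hyx₀ : (0:ℝ) < y - x₀ := by linarith
        have ha0 : 0 < a := div_pos (by linarith) hyx₀
        have hb0 : 0 < b := by
          apply div_pos <;> linarith
        have hab : a + b = 1 := by
          rw [ha, hb, ← add_div, div_eq_one_iff_eq (ne_of_gt hyx₀)]
          ring
        have hxeq : a • x₀ + b • y = x := by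
          rw [smul_eq_mul, smul_eq_mul, ha, hb, div_mul_eq_mul_div,
            div_mul_eq_mul_div, ← add_div, div_eq_iff (ne_of_gt hyx₀)]
          ring
        have := hconv.2 (Set.left_mem_Icc.2 hx₀y.le) (Set.right_mem_Icc.2 hx₀y.le) (ne_of_lt hx₀y) ha0 hb0 hab
        rw [hxeq] at this
        have h3 : a • L x₀ + b • L y = a * L x₀ := by rw [hLy]; simp
        rw [h3] at this
        nlinarith
  intro x hx
  refine ⟨?_, key x hx⟩
  rcases eq_or_ne x φy with rfl | h1
  · exact hLφy.le
  rcases eq_or_ne x y with rfl | h2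
  · exact hLy.le
  exact (key x hx h1 h2).le
end
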